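/- Assume ρ(θ) ≤ U_ρ for all θ ∈ Θ with U_ρ ≥ 1. Let θ₁,…,θ_N ∈ Θ be distinct and let α ∈ (0, min_{i≠j} ‖θ_i − θ_j‖₂), so that the closed balls B(θ_i, α) are pairwise disjoint; assume z_i := μ_ρ(B(θ_i,α)) > 0 for each i and set φ_{i,α}(θ) := ρ(θ)·1{‖θ − θ_i‖₂ ≤ α}/z_i. Let b : Θ → ℝ belong to the closure, with respect to the norm ‖·‖_{2,ρ}, of the linear span of {φ_{1,α},…,φ_{N,α}}. Then for every ξ > 0 and every b₀ ∈ ℝ there exist β₁,…,β_N ∈ ℝ such that sup_{s∈S} | ( b₀ + ∫_Θ b(θ) φ(s;θ) dθ ) − ( b₀ + Σ_{i=1}^N β_i φ(s;θ_i) ) | ≤ √U_ρ · ξ + α · √(N U_ρ) · L · (D+1) · ( ‖b‖_{2,ρ} + ξ ). -/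

import Mathlib

open MeasureTheory ProbabilityTheory

set_option maxHeartbeats 1000000

private lemma amgm_abs {x r c : ℝ} (hr : 0 < r) (hc : 0 < c) :
    |x| ≤ x ^ 2 / (2 * c * r) + c * r / 2 := by
  have h0 : (0:ℝ) < 2 * c * r := by positivity
  have key : |x| * (2 * c * r) ≤ x ^ 2 + (c * r) ^ 2 := by
    nlinarith [sq_nonneg (|x| - c * r), sq_abs x]
  have h1 : |x| ≤ (x ^ 2 + (c * r) ^ 2) / (2 * c * r) := (le_div_iff₀ h0).mpr key
  refine h1.trans (le_of_eq ?_)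
  field_simp


/-- The random basis function `φ(s;θ) = φ̄(⟨(1,s), θ⟩)`. -/
noncomputable def phi (d : ℕ) (phibar : ℝ → ℝ)
    (θ : EuclideanSpace ℝ (Fin (d + 1))) (s : EuclideanSpace ℝ (Fin d)) : ℝ :=
  phibar (θ 0 + ∑ i : Fin d, s i * θ i.succ)

/-- The sampling measure `μ_ρ` on `Θ = ℝ^{d+1}`, with density `ρ` w.r.t. Lebesgue. -/
noncomputable def muRho (d : ℕ) (ρ : EuclideanSpace ℝ (Fin (d + 1)) → ℝ) :
    Measure (EuclideanSpace ℝ (Fin (d + 1))) :=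
  volume.withDensity fun θ => ENNReal.ofReal (ρ θ)

/-- The norm `‖b‖_{2,ρ} = ( ∫_Θ b(θ)²/ρ(θ) dθ )^{1/2}`. -/
noncomputable def l2Rho (d : ℕ) (ρ b : EuclideanSpace ℝ (Fin (d + 1)) → ℝ) : ℝ :=
  Real.sqrt (∫ θ, (b θ) ^ 2 / ρ θ)

/-- The normalized local bump `φ_{i,α}(θ) = ρ(θ) 1{‖θ − θᵢ‖ ≤ α} / zᵢ`. -/
noncomputable def stump (d : ℕ) (ρ : EuclideanSpace ℝ (Fin (d + 1)) → ℝ)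
    (θi : EuclideanSpace ℝ (Fin (d + 1))) (α zi : ℝ)
    (t : EuclideanSpace ℝ (Fin (d + 1))) : ℝ :=
  ρ t * (if dist t θi ≤ α then 1 else 0) / zi

private lemma stump_eq_indicator (d : ℕ) (ρ : EuclideanSpace ℝ (Fin (d + 1)) → ℝ)
    (θi : EuclideanSpace ℝ (Fin (d + 1))) (α zi : ℝ) :
    stump d ρ θi α zi = (Metric.closedBall θi α).indicator (fun t => ρ t / zi) := by
  funext t
  by_cases h : t ∈ Metric.closedBall θi α
  · rw [Set.indicator_of_mem h]
    have h' : dist t θi ≤ α := Metric.mem_closedBall.mp h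
    simp [stump, h']
  · rw [Set.indicator_of_notMem h]
    have h' : ¬ dist t θi ≤ α := fun hc => h (Metric.mem_closedBall.mpr hc)
    simp [stump, h']

/-- If `b` lies in the `‖·‖_{2,ρ}`-closure of the span of the bumps
`φ_{1,α},…,φ_{N,α}`, then for every `ξ > 0` and every intercept `b₀` there are coefficients
`β₁,…,β_N` such that the finite combination `b₀ + Σᵢ βᵢ φ(s;θᵢ)` uniformly approximates
`b₀ + ∫ b φ(s;·)` up to `√U_ρ ξ + α √(N U_ρ) L (D+1)(‖b‖_{2,ρ} + ξ)`. -/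
theorem stmt_10
    {d : ℕ} (Sset : Set (EuclideanSpace ℝ (Fin d)))
    (D : ℝ) (hD : ∀ s ∈ Sset, Real.sqrt (1 + ‖s‖ ^ 2) ≤ D + 1)
    (L : NNReal) (phibar : ℝ → ℝ) (hLip : LipschitzWith L phibar)
    (hphibar_bdd : ∀ x, |phibar x| ≤ 1)
    (ρ : EuclideanSpace ℝ (Fin (d + 1)) → ℝ) (hρ_meas : Measurable ρ)
    (hρ_pos : ∀ θ, 0 < ρ θ) (hρ_prob : IsProbabilityMeasure (muRho d ρ))
    (Uρ : ℝ) (hUρ : 1 ≤ Uρ) (hρ_le : ∀ θ, ρ θ ≤ Uρ)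
    (N : ℕ) (θ : Fin N → EuclideanSpace ℝ (Fin (d + 1))) (hθ : Function.Injective θ)
    (α : ℝ) (hα0 : 0 < α) (hα : ∀ i j, i ≠ j → α < dist (θ i) (θ j))
    (hdisj : Pairwise fun i j =>
      Disjoint (Metric.closedBall (θ i) α) (Metric.closedBall (θ j) α))
    (z : Fin N → ℝ)
    (hz : ∀ i, z i = (muRho d ρ (Metric.closedBall (θ i) α)).toReal)
    (hz_pos : ∀ i, 0 < z i)
    (b : EuclideanSpace ℝ (Fin (d + 1)) → ℝ) (hb_meas : Measurable b)
    (hb_l2 : Integrable (fun t => (b t) ^ 2 / ρ t))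
    (hb_closure : ∀ ξ : ℝ, 0 < ξ → ∃ cvec : Fin N → ℝ,
      Integrable (fun t => (b t - ∑ i : Fin N, cvec i * stump d ρ (θ i) α (z i) t) ^ 2 / ρ t) ∧
      l2Rho d ρ (fun t => b t - ∑ i : Fin N, cvec i * stump d ρ (θ i) α (z i) t) ≤ ξ) :
    ∀ ξ : ℝ, 0 < ξ → ∀ b₀ : ℝ, ∃ β : Fin N → ℝ, ∀ s ∈ Sset,
      |(b₀ + ∫ t, b t * phi d phibar t s)
          - (b₀ + ∑ i : Fin N, β i * phi d phibar (θ i) s)|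
        ≤ Real.sqrt Uρ * ξ
          + α * Real.sqrt ((N : ℝ) * Uρ) * (L : ℝ) * (D + 1) * (l2Rho d ρ b + ξ) := by
  intro ξ hξ b₀
  obtain ⟨c, hgint0, hgl2⟩ := hb_closure ξ hξ
  -- abbreviations
  set hh : EuclideanSpace ℝ (Fin (d + 1)) → ℝ :=
    fun t => ∑ i : Fin N, c i * stump d ρ (θ i) α (z i) t with hhdef
  set g : EuclideanSpace ℝ (Fin (d + 1)) → ℝ := fun t => b t - hh t with hgdef
  have hgint : Integrable (fun t => (g t) ^ 2 / ρ t) := hgint0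
  have hgl2' : l2Rho d ρ g ≤ ξ := hgl2
  set A := l2Rho d ρ b with hAdef
  have hA0 : 0 ≤ A := Real.sqrt_nonneg _
  -- basic facts about ρ
  have hρ0 : 0 ≤ᵐ[volume] ρ := Filter.Eventually.of_forall fun t => (hρ_pos t).le
  have hlρ : ∫⁻ t, ENNReal.ofReal (ρ t) = 1 := by
    have h := hρ_prob.measure_univ
    rwa [muRho, withDensity_apply _ MeasurableSet.univ, Measure.restrict_univ] at h
  have hρint : Integrable ρ := by
    refine ⟨hρ_meas.aestronglyMeasurable, ?_⟩
    rw [hasFiniteIntegral_iff_ofReal hρ0, hlρ]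
    exact ENNReal.one_lt_top
  have hρ1 : ∫ t, ρ t = 1 := by
    rw [integral_eq_lintegral_of_nonneg_ae hρ0 hρ_meas.aestronglyMeasurable, hlρ]
    simp
  have hz_int : ∀ i, ∫ t in Metric.closedBall (θ i) α, ρ t = z i := by
    intro i
    rw [integral_eq_lintegral_of_nonneg_ae (ae_restrict_of_ae hρ0)
        hρ_meas.aestronglyMeasurable.restrict, hz i, muRho,
      withDensity_apply _ measurableSet_closedBall]
  have hz_le_one : ∀ i, z i ≤ 1 := by
    intro i
    rw [hz i]
    calc (muRho d ρ (Metric.closedBall (θ i) α)).toReal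
        ≤ (1 : ENNReal).toReal := ENNReal.toReal_mono ENNReal.one_ne_top prob_le_one
      _ = 1 := by simp
  -- stump facts
  have hst_meas : ∀ i, Measurable (stump d ρ (θ i) α (z i)) := by
    intro i
    rw [stump_eq_indicator]
    exact (hρ_meas.div_const _).indicator measurableSet_closedBall
  have hst_int : ∀ i, Integrable (stump d ρ (θ i) α (z i)) := by
    intro i
    rw [stump_eq_indicator]
    exact (hρint.div_const _).indicator measurableSet_closedBall
  have hst_nonneg : ∀ i t, 0 ≤ stump d ρ (θ i) α (z i) t := by
    intro i t
    refine div_nonneg (mul_nonneg (hρ_pos t).le ?_) (hz_pos i).le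
    split_ifs <;> norm_num
  have hst_le : ∀ i t, stump d ρ (θ i) α (z i) t ≤ ρ t / z i := by
    intro i t
    rw [stump_eq_indicator]
    exact Set.indicator_le_self' (fun t _ => div_nonneg (hρ_pos t).le (hz_pos i).le) t
  have hh_meas : Measurable hh := by
    rw [hhdef]
    exact Finset.measurable_sum _ fun i _ => (hst_meas i).const_mul (c i)
  have hg_meas : Measurable g := hb_meas.sub hh_meas
  -- integral of g^2/ρ is at most ξ^2
  have hg2_nonneg : 0 ≤ ∫ t, g t ^ 2 / ρ t :=
    integral_nonneg fun t => div_nonneg (sq_nonneg _) (hρ_pos t).le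
  have hg2_le : ∫ t, g t ^ 2 / ρ t ≤ ξ ^ 2 := by
    have h1 : Real.sqrt (∫ t, g t ^ 2 / ρ t) ≤ ξ := hgl2'
    calc ∫ t, g t ^ 2 / ρ t = Real.sqrt (∫ t, g t ^ 2 / ρ t) ^ 2 :=
          (Real.sq_sqrt hg2_nonneg).symm
      _ ≤ ξ ^ 2 := pow_le_pow_left₀ (Real.sqrt_nonneg _) h1 2
  have hbA : ∫ t, b t ^ 2 / ρ t = A ^ 2 := by
    rw [hAdef, l2Rho, Real.sq_sqrt (integral_nonneg fun t => div_nonneg (sq_nonneg _) (hρ_pos t).le)]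
  -- the key sum-of-squares bound
  have hhint : Integrable (fun t => hh t ^ 2 / ρ t) := by
    refine Integrable.mono' ((hb_l2.const_mul 2).add (hgint.const_mul 2))
      ((hh_meas.pow_const 2).div hρ_meas).aestronglyMeasurable
      (Filter.Eventually.of_forall fun t => ?_)
    have hbg : hh t = b t - g t := by simp [hgdef]
    have h1 : hh t ^ 2 ≤ 2 * b t ^ 2 + 2 * g t ^ 2 := by
      rw [hbg]; nlinarith [sq_nonneg (b t + g t)]
    have h2 : 0 < ρ t := hρ_pos t
    rw [Real.norm_eq_abs, abs_of_nonneg (by positivity)]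
    calc hh t ^ 2 / ρ t ≤ (2 * b t ^ 2 + 2 * g t ^ 2) / ρ t := by gcongr
      _ = 2 * (b t ^ 2 / ρ t) + 2 * (g t ^ 2 / ρ t) := by field_simp
  have hint_ball : ∀ i, ∫ t in Metric.closedBall (θ i) α, hh t ^ 2 / ρ t
      = c i ^ 2 / z i := by
    intro i
    have heq : Set.EqOn (fun t => hh t ^ 2 / ρ t)
        (fun t => c i ^ 2 / z i ^ 2 * ρ t) (Metric.closedBall (θ i) α) := by
      intro t ht
      have hmem : dist t (θ i) ≤ α := Metric.mem_closedBall.mp ht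
      have hhi : hh t = c i * (ρ t / z i) := by
        simp only [hhdef]
        rw [Finset.sum_eq_single i]
        · rw [stump_eq_indicator, Set.indicator_of_mem ht]
        · intro j _ hji
          have hnot : t ∉ Metric.closedBall (θ j) α :=
            Set.disjoint_left.mp (hdisj hji.symm) ht
          rw [stump_eq_indicator, Set.indicator_of_notMem hnot, mul_zero]
        · intro hi; exact absurd (Finset.mem_univ i) hi
      have h2 : ρ t ≠ 0 := (hρ_pos t).ne'
      have h3 : z i ≠ 0 := (hz_pos i).ne'
      simp only [hhi]
      field_simp
    rw [setIntegral_congr_fun measurableSet_closedBall heq, integral_const_mul, hz_int i]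
    have h3 : z i ≠ 0 := (hz_pos i).ne'
    field_simp
  have hsum_sq : ∑ i : Fin N, (c i) ^ 2 ≤ (A + ξ) ^ 2 := by
    have step2 : ∑ i : Fin N, c i ^ 2 / z i ≤ ∫ t, hh t ^ 2 / ρ t := by
      have hunion : ∫ t in ⋃ i ∈ Finset.univ, Metric.closedBall (θ i) α, hh t ^ 2 / ρ t
          = ∑ i : Fin N, ∫ t in Metric.closedBall (θ i) α, hh t ^ 2 / ρ t :=
        integral_biUnion_finset Finset.univ (fun i _ => measurableSet_closedBall)
          (fun i _ j _ hij => hdisj hij) (fun i _ => hhint.integrableOn)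
      calc ∑ i : Fin N, c i ^ 2 / z i
          = ∑ i : Fin N, ∫ t in Metric.closedBall (θ i) α, hh t ^ 2 / ρ t := by
            simp_rw [hint_ball]
        _ = ∫ t in ⋃ i ∈ Finset.univ, Metric.closedBall (θ i) α, hh t ^ 2 / ρ t :=
            hunion.symm
        _ ≤ ∫ t, hh t ^ 2 / ρ t :=
            setIntegral_le_integral hhint
              (Filter.Eventually.of_forall fun t => div_nonneg (sq_nonneg _) (hρ_pos t).le)
    have step3 : ∑ i : Fin N, (c i) ^ 2 ≤ ∑ i : Fin N, c i ^ 2 / z i := by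
      refine Finset.sum_le_sum fun i _ => ?_
      rw [le_div_iff₀ (hz_pos i)]
      exact mul_le_of_le_one_right (sq_nonneg _) (hz_le_one i)
    have step4 : ∫ t, hh t ^ 2 / ρ t ≤ (A + ξ) ^ 2 := by
      by_cases hA : A = 0
      · have hb0 : ∫ t, b t ^ 2 / ρ t = 0 := by rw [hbA, hA]; ring
        have hbz : (fun t => b t ^ 2 / ρ t) =ᵐ[volume] 0 :=
          (integral_eq_zero_iff_of_nonneg
            (fun t => div_nonneg (sq_nonneg _) (hρ_pos t).le) hb_l2).mp hb0
        have hcongr : (fun t => hh t ^ 2 / ρ t) =ᵐ[volume] (fun t => g t ^ 2 / ρ t) := by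
          filter_upwards [hbz] with t ht
          have h2 : 0 < ρ t := hρ_pos t
          have hb00 : b t = 0 := by
            have : b t ^ 2 / ρ t = 0 := ht
            have h4 : b t ^ 2 = 0 :=
              (div_eq_zero_iff.mp this).resolve_right h2.ne'
            exact pow_eq_zero_iff (two_ne_zero) |>.mp h4
          have : hh t = - g t := by simp [hgdef, hb00]
          rw [this]
          ring_nf
        rw [integral_congr_ae hcongr, hA]
        calc ∫ t, g t ^ 2 / ρ t ≤ ξ ^ 2 := hg2_le
          _ = (0 + ξ) ^ 2 := by ring
      · have hApos : 0 < A := lt_of_le_of_ne hA0 (Ne.symm hA)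
        set ε := ξ / A with hεdef
        have hε : 0 < ε := div_pos hξ hApos
        have hδg : ∀ t : ℝ, ε * (1 / ε) * t = t := fun t => by
          rw [mul_one_div_cancel hε.ne', one_mul]
        have hpt : ∀ t, hh t ^ 2 / ρ t
            ≤ (1 + ε) * (b t ^ 2 / ρ t) + (1 + 1 / ε) * (g t ^ 2 / ρ t) := by
          intro t
          have h2 : 0 < ρ t := hρ_pos t
          have hbg : hh t = b t - g t := by simp [hgdef]
          have h1 : hh t ^ 2 ≤ (1 + ε) * b t ^ 2 + (1 + 1 / ε) * g t ^ 2 := by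
            rw [hbg]
            have hδ : ε * (1 / ε) = 1 := mul_one_div_cancel hε.ne'
            have key : ε * ((1 + ε) * b t ^ 2 + (1 + 1 / ε) * g t ^ 2 - (b t - g t) ^ 2)
                = (ε * b t + g t) ^ 2 := by
              calc ε * ((1 + ε) * b t ^ 2 + (1 + 1 / ε) * g t ^ 2 - (b t - g t) ^ 2)
                  = ε ^ 2 * b t ^ 2 + (ε * (1 / ε)) * g t ^ 2 + 2 * ε * b t * g t := by ring
                _ = (ε * b t + g t) ^ 2 := by rw [hδ]; ring
            have h5 : ε * 0 ≤ ε * ((1 + ε) * b t ^ 2 + (1 + 1 / ε) * g t ^ 2 - (b t - g t) ^ 2) := by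
              rw [key, mul_zero]
              exact sq_nonneg _
            have h6 := le_of_mul_le_mul_left h5 hε
            linarith
          calc hh t ^ 2 / ρ t ≤ ((1 + ε) * b t ^ 2 + (1 + 1 / ε) * g t ^ 2) / ρ t := by gcongr
            _ = (1 + ε) * (b t ^ 2 / ρ t) + (1 + 1 / ε) * (g t ^ 2 / ρ t) := by
              field_simp
        have hrhs : Integrable (fun t =>
            (1 + ε) * (b t ^ 2 / ρ t) + (1 + 1 / ε) * (g t ^ 2 / ρ t)) :=
          (hb_l2.const_mul _).add (hgint.const_mul _)
        calc ∫ t, hh t ^ 2 / ρ t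
            ≤ ∫ t, ((1 + ε) * (b t ^ 2 / ρ t) + (1 + 1 / ε) * (g t ^ 2 / ρ t)) :=
              integral_mono hhint hrhs hpt
          _ = (1 + ε) * (∫ t, b t ^ 2 / ρ t) + (1 + 1 / ε) * (∫ t, g t ^ 2 / ρ t) := by
              rw [integral_add (hb_l2.const_mul _) (hgint.const_mul _),
                integral_const_mul, integral_const_mul]
          _ ≤ (1 + ε) * A ^ 2 + (1 + 1 / ε) * ξ ^ 2 := by
              rw [hbA]
              have : 0 ≤ 1 + 1 / ε := by positivity
              nlinarith [hg2_le]
          _ = (A + ξ) ^ 2 := by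
              rw [hεdef]
              field_simp
              ring
    calc ∑ i : Fin N, (c i) ^ 2 ≤ ∑ i : Fin N, c i ^ 2 / z i := step3
      _ ≤ ∫ t, hh t ^ 2 / ρ t := step2
      _ ≤ (A + ξ) ^ 2 := step4
  have hsum_abs : ∑ i : Fin N, |c i| ≤ Real.sqrt N * (A + ξ) := by
    have h1 : (∑ i : Fin N, |c i|) ^ 2 ≤ (N : ℝ) * ∑ i : Fin N, (c i) ^ 2 := by
      have := sq_sum_le_card_mul_sum_sq (s := (Finset.univ : Finset (Fin N)))
        (f := fun i => |c i|)
      simpa [sq_abs] using this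
    have h2 : (∑ i : Fin N, |c i|) ^ 2 ≤ (N : ℝ) * (A + ξ) ^ 2 :=
      h1.trans (mul_le_mul_of_nonneg_left hsum_sq (Nat.cast_nonneg N))
    have h3 : 0 ≤ ∑ i : Fin N, |c i| := Finset.sum_nonneg fun i _ => abs_nonneg _
    calc ∑ i : Fin N, |c i| = Real.sqrt ((∑ i : Fin N, |c i|) ^ 2) :=
          (Real.sqrt_sq h3).symm
      _ ≤ Real.sqrt ((N : ℝ) * (A + ξ) ^ 2) := Real.sqrt_le_sqrt h2
      _ = Real.sqrt N * (A + ξ) := by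
          rw [Real.sqrt_mul (Nat.cast_nonneg _), Real.sqrt_sq (by positivity)]
  refine ⟨c, ?_⟩
  intro s hs
  have hDpos : (0:ℝ) ≤ D + 1 := le_trans (Real.sqrt_nonneg _) (hD s hs)
  -- the vector (1, s)
  set u : EuclideanSpace ℝ (Fin (d + 1)) := WithLp.toLp 2 (Fin.cons (1:ℝ) (fun i => s i) : Fin (d + 1) → ℝ) with hudef
  have hinner : ∀ t : EuclideanSpace ℝ (Fin (d + 1)),
      (inner ℝ u t : ℝ) = t 0 + ∑ i : Fin d, s i * t i.succ := by
    intro t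
    rw [PiLp.inner_apply]
    simp [Fin.sum_univ_succ, hudef, mul_comm]
  have hn : ‖u‖ = Real.sqrt (1 + ‖s‖ ^ 2) := by
    rw [EuclideanSpace.norm_eq, EuclideanSpace.norm_eq]
    congr 1
    rw [Fin.sum_univ_succ]
    simp [hudef]
    rw [Real.sq_sqrt (by positivity)]
  have hφ_eq : ∀ t, phi d phibar t s = phibar (inner ℝ u t) := by
    intro t
    simp only [phi]
    rw [hinner t]
  have hφ_meas : Measurable fun t => phi d phibar t s := by
    have hfe : (fun t : EuclideanSpace ℝ (Fin (d + 1)) => phi d phibar t s)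
        = fun t => phibar (inner ℝ u t) := funext hφ_eq
    rw [hfe]
    exact (hLip.continuous.comp (continuous_const.inner continuous_id)).measurable
  have hφ_bd : ∀ t, |phi d phibar t s| ≤ 1 := fun t => hphibar_bdd _
  have hφ_lip : ∀ t t', |phi d phibar t s - phi d phibar t' s|
      ≤ (L : ℝ) * ((D + 1) * dist t t') := by
    intro t t'
    rw [hφ_eq t, hφ_eq t']
    have h1 := hLip.dist_le_mul (inner ℝ u t : ℝ) (inner ℝ u t')
    rw [Real.dist_eq, Real.dist_eq] at h1
    have h2 : |(inner ℝ u t : ℝ) - inner ℝ u t'| = |(inner ℝ u (t - t') : ℝ)| := by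
      rw [inner_sub_right]
    have h3 : |(inner ℝ u (t - t') : ℝ)| ≤ ‖u‖ * ‖t - t'‖ := abs_real_inner_le_norm u (t - t')
    have h4 : ‖u‖ ≤ D + 1 := by rw [hn]; exact hD s hs
    calc |phibar (inner ℝ u t) - phibar (inner ℝ u t')|
        ≤ (L : ℝ) * |(inner ℝ u t : ℝ) - inner ℝ u t'| := h1
      _ = (L : ℝ) * |(inner ℝ u (t - t') : ℝ)| := by rw [h2]
      _ ≤ (L : ℝ) * (‖u‖ * ‖t - t'‖) := mul_le_mul_of_nonneg_left h3 L.coe_nonneg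
      _ ≤ (L : ℝ) * ((D + 1) * dist t t') := by
          rw [dist_eq_norm]
          exact mul_le_mul_of_nonneg_left
            (mul_le_mul_of_nonneg_right h4 (norm_nonneg _)) L.coe_nonneg
  -- the error term ∫ g φ
  have hbound_int : Integrable (fun t => g t ^ 2 / ρ t / (2 * ξ) + ρ t * (ξ / 2)) :=
    (hgint.div_const _).add (hρint.mul_const _)
  have hptg : ∀ t, ‖g t * phi d phibar t s‖ ≤ g t ^ 2 / ρ t / (2 * ξ) + ρ t * (ξ / 2) := by
    intro t
    rw [Real.norm_eq_abs, abs_mul]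
    calc |g t| * |phi d phibar t s| ≤ |g t| * 1 :=
          mul_le_mul_of_nonneg_left (hφ_bd t) (abs_nonneg _)
      _ = |g t| := mul_one _
      _ ≤ g t ^ 2 / (2 * ξ * ρ t) + ξ * ρ t / 2 := amgm_abs (hρ_pos t) hξ
      _ = g t ^ 2 / ρ t / (2 * ξ) + ρ t * (ξ / 2) := by rw [div_div]; ring
  have hI1int : Integrable (fun t => g t * phi d phibar t s) :=
    Integrable.mono' hbound_int (hg_meas.mul hφ_meas).aestronglyMeasurable
      (Filter.Eventually.of_forall hptg)
  have hI1 : |∫ t, g t * phi d phibar t s| ≤ ξ := by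
    have h1 : |∫ t, g t * phi d phibar t s| ≤ ∫ t, ‖g t * phi d phibar t s‖ := by
      rw [← Real.norm_eq_abs]
      exact norm_integral_le_integral_norm _
    have h2 : ∫ t, ‖g t * phi d phibar t s‖
        ≤ ∫ t, (g t ^ 2 / ρ t / (2 * ξ) + ρ t * (ξ / 2)) :=
      integral_mono hI1int.norm hbound_int hptg
    have h3 : ∫ t, (g t ^ 2 / ρ t / (2 * ξ) + ρ t * (ξ / 2))
        = (∫ t, g t ^ 2 / ρ t) / (2 * ξ) + (∫ t, ρ t) * (ξ / 2) := by
      rw [integral_add (hgint.div_const _) (hρint.mul_const _), integral_div,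
        integral_mul_const]
    have h4 : (∫ t, g t ^ 2 / ρ t) / (2 * ξ) ≤ ξ / 2 := by
      rw [div_le_iff₀ (by linarith : (0:ℝ) < 2 * ξ)]
      nlinarith [hg2_le]
    rw [hρ1] at h3
    linarith [h1.trans (h2.trans_eq h3)]
  -- the per-index bump approximation
  have hstφ_int : ∀ i, Integrable
      (fun t => stump d ρ (θ i) α (z i) t * phi d phibar t s) := by
    intro i
    refine Integrable.mono' (hρint.div_const (z i))
      ((hst_meas i).mul hφ_meas).aestronglyMeasurable
      (Filter.Eventually.of_forall fun t => ?_)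
    rw [Real.norm_eq_abs, abs_mul, abs_of_nonneg (hst_nonneg i t)]
    calc stump d ρ (θ i) α (z i) t * |phi d phibar t s|
        ≤ stump d ρ (θ i) α (z i) t * 1 :=
          mul_le_mul_of_nonneg_left (hφ_bd t) (hst_nonneg i t)
      _ = stump d ρ (θ i) α (z i) t := mul_one _
      _ ≤ ρ t / z i := hst_le i t
  have hI2 : ∀ i, |(∫ t, stump d ρ (θ i) α (z i) t * phi d phibar t s)
      - phi d phibar (θ i) s| ≤ (L : ℝ) * ((D + 1) * α) := by
    intro i
    have hindeq : (fun t => stump d ρ (θ i) α (z i) t * phi d phibar t s)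
        = (Metric.closedBall (θ i) α).indicator
            (fun t => ρ t / z i * phi d phibar t s) := by
      funext t
      rw [stump_eq_indicator]
      by_cases ht : t ∈ Metric.closedBall (θ i) α
      · rw [Set.indicator_of_mem ht, Set.indicator_of_mem ht]
      · rw [Set.indicator_of_notMem ht, Set.indicator_of_notMem ht, zero_mul]
    have int1 : IntegrableOn (fun t => ρ t / z i * phi d phibar t s)
        (Metric.closedBall (θ i) α) := by
      refine Integrable.mono' ((hρint.integrableOn).div_const (z i))
        ((hρ_meas.div_const _).mul hφ_meas).aestronglyMeasurable.restrict
        (Filter.Eventually.of_forall fun t => ?_)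
      rw [Real.norm_eq_abs, abs_mul]
      have hρz : 0 ≤ ρ t / z i := div_nonneg (hρ_pos t).le (hz_pos i).le
      rw [abs_of_nonneg hρz]
      calc ρ t / z i * |phi d phibar t s| ≤ ρ t / z i * 1 :=
            mul_le_mul_of_nonneg_left (hφ_bd t) hρz
        _ = ρ t / z i := mul_one _
    have int2 : IntegrableOn (fun t => ρ t / z i * phi d phibar (θ i) s)
        (Metric.closedBall (θ i) α) :=
      ((hρint.integrableOn).div_const (z i)).mul_const _
    have hconst : ∫ t in Metric.closedBall (θ i) α, ρ t / z i * phi d phibar (θ i) s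
        = phi d phibar (θ i) s := by
      rw [integral_mul_const, integral_div, hz_int i, div_self (hz_pos i).ne', one_mul]
    have intF : IntegrableOn
        (fun t => ρ t / z i * (phi d phibar t s - phi d phibar (θ i) s))
        (Metric.closedBall (θ i) α) := by
      refine (int1.sub int2).congr (Filter.Eventually.of_forall fun t => ?_)
      simp only [Pi.sub_apply]
      ring
    rw [hindeq, integral_indicator measurableSet_closedBall]
    have hdiffeq : (∫ t in Metric.closedBall (θ i) α, ρ t / z i * phi d phibar t s)
        - phi d phibar (θ i) s
        = ∫ t in Metric.closedBall (θ i) α,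
            ρ t / z i * (phi d phibar t s - phi d phibar (θ i) s) := by
      calc (∫ t in Metric.closedBall (θ i) α, ρ t / z i * phi d phibar t s)
            - phi d phibar (θ i) s
          = (∫ t in Metric.closedBall (θ i) α, ρ t / z i * phi d phibar t s)
            - ∫ t in Metric.closedBall (θ i) α, ρ t / z i * phi d phibar (θ i) s := by
            rw [hconst]
        _ = ∫ t in Metric.closedBall (θ i) α,
              (ρ t / z i * phi d phibar t s - ρ t / z i * phi d phibar (θ i) s) :=
            (integral_sub int1 int2).symm
        _ = ∫ t in Metric.closedBall (θ i) α,
              ρ t / z i * (phi d phibar t s - phi d phibar (θ i) s) := by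
            congr 1
            funext t
            ring
    rw [hdiffeq]
    have hrhs_int : IntegrableOn (fun t => ρ t / z i * ((L : ℝ) * ((D + 1) * α)))
        (Metric.closedBall (θ i) α) :=
      ((hρint.integrableOn).div_const (z i)).mul_const _
    have hbnd : ∀ t ∈ Metric.closedBall (θ i) α,
        ‖ρ t / z i * (phi d phibar t s - phi d phibar (θ i) s)‖
          ≤ ρ t / z i * ((L : ℝ) * ((D + 1) * α)) := by
      intro t ht
      have hρz : 0 ≤ ρ t / z i := div_nonneg (hρ_pos t).le (hz_pos i).le
      rw [Real.norm_eq_abs, abs_mul, abs_of_nonneg hρz]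
      refine mul_le_mul_of_nonneg_left ?_ hρz
      refine (hφ_lip t (θ i)).trans ?_
      have hd : dist t (θ i) ≤ α := Metric.mem_closedBall.mp ht
      exact mul_le_mul_of_nonneg_left
        (mul_le_mul_of_nonneg_left hd hDpos) L.coe_nonneg
    calc |∫ t in Metric.closedBall (θ i) α,
            ρ t / z i * (phi d phibar t s - phi d phibar (θ i) s)|
        ≤ ∫ t in Metric.closedBall (θ i) α,
            ‖ρ t / z i * (phi d phibar t s - phi d phibar (θ i) s)‖ := by
          rw [← Real.norm_eq_abs]
          exact norm_integral_le_integral_norm _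
      _ ≤ ∫ t in Metric.closedBall (θ i) α, ρ t / z i * ((L : ℝ) * ((D + 1) * α)) :=
          setIntegral_mono_on intF.norm hrhs_int measurableSet_closedBall hbnd
      _ = (L : ℝ) * ((D + 1) * α) := by
          rw [integral_mul_const, integral_div, hz_int i, div_self (hz_pos i).ne',
            one_mul]
  -- splitting the integral
  have hsumint : Integrable (fun t =>
      ∑ i : Fin N, c i * (stump d ρ (θ i) α (z i) t * phi d phibar t s)) :=
    integrable_finset_sum _ fun i _ => (hstφ_int i).const_mul (c i)
  have hsplit : ∫ t, b t * phi d phibar t s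
      = (∫ t, g t * phi d phibar t s)
        + ∑ i : Fin N, c i * ∫ t, stump d ρ (θ i) α (z i) t * phi d phibar t s := by
    have e1 : (fun t => b t * phi d phibar t s)
        = fun t => g t * phi d phibar t s
            + ∑ i : Fin N, c i * (stump d ρ (θ i) α (z i) t * phi d phibar t s) := by
      funext t
      simp only [hgdef, hhdef]
      rw [Finset.sum_congr rfl fun i _ => (mul_assoc (c i) _ _).symm, ← Finset.sum_mul]
      ring
    rw [e1, integral_add hI1int hsumint,
      integral_finset_sum _ fun i _ => (hstφ_int i).const_mul (c i)]
    congr 1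
    exact Finset.sum_congr rfl fun i _ => integral_const_mul _ _
  have key : (b₀ + ∫ t, b t * phi d phibar t s)
      - (b₀ + ∑ i : Fin N, c i * phi d phibar (θ i) s)
      = (∫ t, g t * phi d phibar t s)
        + ∑ i : Fin N, c i * ((∫ t, stump d ρ (θ i) α (z i) t * phi d phibar t s)
            - phi d phibar (θ i) s) := by
    rw [hsplit, Finset.sum_congr rfl fun i _ => mul_sub (c i) _ _,
      Finset.sum_sub_distrib]
    ring
  rw [key]
  have hLD : (0:ℝ) ≤ (L : ℝ) * ((D + 1) * α) :=
    mul_nonneg L.coe_nonneg (mul_nonneg hDpos hα0.le)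
  have hterm : |∑ i : Fin N, c i * ((∫ t, stump d ρ (θ i) α (z i) t * phi d phibar t s)
      - phi d phibar (θ i) s)| ≤ (∑ i : Fin N, |c i|) * ((L : ℝ) * ((D + 1) * α)) := by
    calc |∑ i : Fin N, c i * ((∫ t, stump d ρ (θ i) α (z i) t * phi d phibar t s)
          - phi d phibar (θ i) s)|
        ≤ ∑ i : Fin N, |c i * ((∫ t, stump d ρ (θ i) α (z i) t * phi d phibar t s)
            - phi d phibar (θ i) s)| := Finset.abs_sum_le_sum_abs _ _
      _ = ∑ i : Fin N, |c i| * |(∫ t, stump d ρ (θ i) α (z i) t * phi d phibar t s)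
            - phi d phibar (θ i) s| := by simp_rw [abs_mul]
      _ ≤ ∑ i : Fin N, |c i| * ((L : ℝ) * ((D + 1) * α)) :=
          Finset.sum_le_sum fun i _ => mul_le_mul_of_nonneg_left (hI2 i) (abs_nonneg _)
      _ = (∑ i : Fin N, |c i|) * ((L : ℝ) * ((D + 1) * α)) := by rw [Finset.sum_mul]
  have hfin1 : |(∫ t, g t * phi d phibar t s)
      + ∑ i : Fin N, c i * ((∫ t, stump d ρ (θ i) α (z i) t * phi d phibar t s)
          - phi d phibar (θ i) s)|
      ≤ ξ + (Real.sqrt N * (A + ξ)) * ((L : ℝ) * ((D + 1) * α)) := by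
    refine (abs_add_le _ _).trans ?_
    exact add_le_add hI1 (hterm.trans (mul_le_mul_of_nonneg_right hsum_abs hLD))
  refine hfin1.trans ?_
  have hsq1 : (1:ℝ) ≤ Real.sqrt Uρ := by
    rw [show (1:ℝ) = Real.sqrt 1 from Real.sqrt_one.symm]
    exact Real.sqrt_le_sqrt hUρ
  have hNU : Real.sqrt ((N : ℝ) * Uρ) = Real.sqrt N * Real.sqrt Uρ :=
    Real.sqrt_mul (Nat.cast_nonneg _) _
  have hξle : ξ ≤ Real.sqrt Uρ * ξ := le_mul_of_one_le_left hξ.le hsq1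
  have hcommon : (0:ℝ) ≤ α * (L : ℝ) * (D + 1) * (A + ξ) :=
    mul_nonneg (mul_nonneg (mul_nonneg hα0.le L.coe_nonneg) hDpos)
      (by linarith : (0:ℝ) ≤ A + ξ)
  have h7 : Real.sqrt N ≤ Real.sqrt N * Real.sqrt Uρ :=
    le_mul_of_one_le_right (Real.sqrt_nonneg _) hsq1
  have hbig : (Real.sqrt N * (A + ξ)) * ((L : ℝ) * ((D + 1) * α))
      ≤ α * Real.sqrt ((N : ℝ) * Uρ) * (L : ℝ) * (D + 1) * (A + ξ) := by
    rw [hNU]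
    calc (Real.sqrt N * (A + ξ)) * ((L : ℝ) * ((D + 1) * α))
        = Real.sqrt N * (α * (L : ℝ) * (D + 1) * (A + ξ)) := by ring
      _ ≤ (Real.sqrt N * Real.sqrt Uρ) * (α * (L : ℝ) * (D + 1) * (A + ξ)) :=
          mul_le_mul_of_nonneg_right h7 hcommon
      _ = α * (Real.sqrt N * Real.sqrt Uρ) * (L : ℝ) * (D + 1) * (A + ξ) := by ring
  linarith
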